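/- Let (R, m) be a commutative local ring with residue field k = R/m and let φ : R^a → R^b be an R-module homomorphism. Then φ is injective with free cokernel of finite rank if and only if the induced map φ̄ : k^a → k^b is injective. -/
import Mathlib


/-- Let `(R, m)` be a commutative local ring with residue field `k = R/m` and
let `φ : R^a → R^b` be an `R`-module homomorphism.  Then `φ` is injective with free cokernel of
finite rank if and only if the induced map `φ̄ : k^a → k^b` (obtained by tensoring with the
residue field) is injective. -/
theorem injective_with_free_cokernel_iff_residue_injective
    (R : Type) [CommRing R] [IsLocalRing R] (a b : ℕ)
    (φ : (Fin a → R) →ₗ[R] (Fin b → R)) :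
    (Function.Injective φ ∧ ∃ c : ℕ,
        Nonempty (((Fin b → R) ⧸ LinearMap.range φ) ≃ₗ[R] (Fin c → R)))
    ↔ Function.Injective (LinearMap.baseChange (IsLocalRing.ResidueField R) φ) := by
  classical
  have hbc : Function.Injective (LinearMap.baseChange (IsLocalRing.ResidueField R) φ)
      ↔ Function.Injective (φ.lTensor (IsLocalRing.ResidueField R)) := by
    rw [show ⇑(LinearMap.baseChange (IsLocalRing.ResidueField R) φ)
        = ⇑(φ.lTensor (IsLocalRing.ResidueField R)) from
      LinearMap.baseChange_eq_ltensor φ]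
  have key := IsLocalRing.split_injective_iff_lTensor_residueField_injective (R := R) φ
  rw [hbc, ← key]
  constructor
  · rintro ⟨hinj, c, ⟨e⟩⟩
    have hfree : Module.Free R ((Fin b → R) ⧸ LinearMap.range φ) := Module.Free.of_equiv e.symm
    have hex := φ.exact_map_mkQ_range
    have htfae := (Function.Exact.split_tfae hex hinj
      (Submodule.mkQ_surjective _)).out 1 0
    rw [htfae]
    exact Module.projective_lifting_property _ _ (Submodule.mkQ_surjective _)
  · rintro ⟨π, hπ⟩
    have hinj : Function.Injective φ :=
      Function.HasLeftInverse.injective ⟨π, LinearMap.congr_fun hπ⟩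
    have hl : Function.Injective (φ.lTensor (IsLocalRing.ResidueField R)) := key.mp ⟨π, hπ⟩
    have hfree : Module.Free R ((Fin b → R) ⧸ LinearMap.range φ) :=
      Module.free_of_lTensor_residueField_injective φ (LinearMap.range φ).mkQ
        (Submodule.mkQ_surjective _) φ.exact_map_mkQ_range hl
    have hfin : Module.Finite R ((Fin b → R) ⧸ LinearMap.range φ) :=
      Module.Finite.quotient R _
    let B := Module.Free.chooseBasis R ((Fin b → R) ⧸ LinearMap.range φ)
    exact ⟨hinj, Fintype.card (Module.Free.ChooseBasisIndex R
        ((Fin b → R) ⧸ LinearMap.range φ)),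
      ⟨(B.reindex (Fintype.equivFin _)).equivFun⟩⟩
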